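/- In the divided power algebra Γ(M), the composite of the comultiplication component Δ_{[i,j]} : Γ^{i+j}(M) → Γ^i(M) ⊗ Γ^j(M) followed by multiplication m_{[i,j]} : Γ^i(M) ⊗ Γ^j(M) → Γ^{i+j}(M) is multiplication by the binomial coefficient C(i+j, i). -/

import Mathlib

open TensorProduct

universe u

/-- The relations defining the free divided power algebra on `M`: the generator
`X (m, n)` stands for `γ_n(m)`. -/
inductive DPRel (R : Type u) [CommRing R] (M : Type u) [AddCommGroup M] [Module R M] :
    MvPolynomial (M × ℕ) R → Prop
  | zero (m : M) : DPRel R M (MvPolynomial.X (m, 0) - 1)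
  | smul (r : R) (m : M) (n : ℕ) :
      DPRel R M (MvPolynomial.X (r • m, n) - MvPolynomial.C (r ^ n) * MvPolynomial.X (m, n))
  | add (m m' : M) (n : ℕ) :
      DPRel R M (MvPolynomial.X (m + m', n) -
        ∑ ij ∈ Finset.HasAntidiagonal.antidiagonal n, MvPolynomial.X (m, ij.1) * MvPolynomial.X (m', ij.2))
  | mul (m : M) (i j : ℕ) :
      DPRel R M (MvPolynomial.X (m, i) * MvPolynomial.X (m, j) -
        ((i + j).choose i : MvPolynomial (M × ℕ) R) * MvPolynomial.X (m, i + j))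

/-- The free divided power algebra `Γ(M)` on the `R`-module `M`. -/
def DPA (R : Type u) [CommRing R] (M : Type u) [AddCommGroup M] [Module R M] : Type u :=
  MvPolynomial (M × ℕ) R ⧸ Ideal.span {p | DPRel R M p}

variable (R : Type u) [CommRing R] (M : Type u) [AddCommGroup M] [Module R M]

noncomputable instance : CommRing (DPA R M) :=
  inferInstanceAs (CommRing (MvPolynomial (M × ℕ) R ⧸ Ideal.span {p | DPRel R M p}))
noncomputable instance : Algebra R (DPA R M) :=
  inferInstanceAs (Algebra R (MvPolynomial (M × ℕ) R ⧸ Ideal.span {p | DPRel R M p}))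

/-- The divided power `γ_n(m) ∈ Γ(M)`. -/
noncomputable def dpGamma (n : ℕ) (m : M) : DPA R M :=
  Ideal.Quotient.mk (Ideal.span {p | DPRel R M p}) (MvPolynomial.X (m, n))

/-- The degree `n` piece `Γⁿ(M)` of `Γ(M)`: the span of products `∏ γ_{n_i}(m_i)`
with `∑ n_i = n`. -/
noncomputable def GammaPow (n : ℕ) : Submodule R (DPA R M) :=
  Submodule.span R {x | ∃ (k : ℕ) (ms : Fin k → M) (ns : Fin k → ℕ),
    (∑ i, ns i) = n ∧ x = ∏ i, dpGamma R M (ns i) (ms i)}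

lemma dpGamma_mem (n : ℕ) (m : M) : dpGamma R M n m ∈ GammaPow R M n :=
  Submodule.subset_span ⟨1, fun _ => m, fun _ => n, by simp, by simp⟩


section Aux

variable {R : Type u} [CommRing R] {M : Type u} [AddCommGroup M] [Module R M]

lemma dpGamma_mul (a b : ℕ) (m : M) :
    dpGamma R M a m * dpGamma R M b m =
      ((a + b).choose a : DPA R M) * dpGamma R M (a + b) m := by
  have h : MvPolynomial.X (m, a) * MvPolynomial.X (m, b) -
      ((a + b).choose a : MvPolynomial (M × ℕ) R) * MvPolynomial.X (m, a + b) ∈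
      Ideal.span {p | DPRel R M p} :=
    Ideal.subset_span (DPRel.mul m a b)
  have h0 := (Ideal.Quotient.eq_zero_iff_mem).mpr h
  rw [map_sub, sub_eq_zero, map_mul, map_mul, map_natCast] at h0
  exact h0

lemma prod_tmul_eq {ι : Type*} (s : Finset ι) (a b : ι → DPA R M) :
    ∏ t ∈ s, (a t ⊗ₜ[R] b t) = (∏ t ∈ s, a t) ⊗ₜ[R] (∏ t ∈ s, b t) := by
  classical
  induction s using Finset.cons_induction with
  | empty => simp [Algebra.TensorProduct.one_def]
  | cons t s hts ih =>
      rw [Finset.prod_cons, Finset.prod_cons, Finset.prod_cons, ih,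
        Algebra.TensorProduct.tmul_mul_tmul]

lemma vand (k : ℕ) (ns : Fin k → ℕ) (i : ℕ) :
    ∑ f ∈ Fintype.piFinset (fun t => Finset.range (ns t + 1)),
      (if (∑ t, f t) = i then ∏ t, (ns t).choose (f t) else 0) = (∑ t, ns t).choose i := by
  classical
  have h1 : ∀ n : ℕ, ((1 + Polynomial.X : Polynomial ℕ) ^ n) =
      ∑ a ∈ Finset.range (n + 1), Polynomial.C ((n).choose a) * Polynomial.X ^ a := by
    intro n
    rw [add_comm, add_pow]
    refine Finset.sum_congr rfl fun a _ => ?_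
    simp [Polynomial.C_eq_natCast]
    ring
  symm
  calc (∑ t, ns t).choose i
      = ((1 + Polynomial.X : Polynomial ℕ) ^ (∑ t, ns t)).coeff i := by
        rw [Polynomial.coeff_one_add_X_pow, Nat.cast_id]
    _ = (∏ t, (1 + Polynomial.X : Polynomial ℕ) ^ (ns t)).coeff i := by
        rw [Finset.prod_pow_eq_pow_sum]
    _ = (∑ f ∈ Fintype.piFinset (fun t => Finset.range (ns t + 1)),
          Polynomial.C (∏ t, (ns t).choose (f t)) * Polynomial.X ^ (∑ t, f t)).coeff i := by
        simp_rw [h1]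
        rw [Finset.prod_univ_sum]
        refine congrArg (fun p => Polynomial.coeff p i)
          (Finset.sum_congr rfl fun f _ => ?_)
        rw [Finset.prod_mul_distrib, map_prod, Finset.prod_pow_eq_pow_sum]
    _ = ∑ f ∈ Fintype.piFinset (fun t => Finset.range (ns t + 1)),
          (if (∑ t, f t) = i then ∏ t, (ns t).choose (f t) else 0) := by
        rw [Polynomial.finset_sum_coeff]
        refine Finset.sum_congr rfl fun f _ => ?_
        rw [Polynomial.coeff_C_mul, Polynomial.coeff_X_pow]
        by_cases h : (∑ t, f t) = i
        · simp [h]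
        · simp [h, Ne.symm h]

end Aux

set_option maxHeartbeats 1000000 in
/-- On `Γ^{i+j}(M)`, the composite of the component `Δ_{[i,j]} : Γ^{i+j}(M) →
Γ^i(M) ⊗ Γ^j(M)` of the comultiplication with the multiplication
`m_{[i,j]} : Γ^i(M) ⊗ Γ^j(M) → Γ^{i+j}(M)` is multiplication by the binomial
coefficient `C(i+j, i)`. Here `Δ` is the comultiplication (characterized on the
`γ_n`) and `proj k` is the projection onto the degree `k` part of the grading. -/
theorem dpa_mul_comp_comul (Δ : DPA R M →ₐ[R] (DPA R M ⊗[R] DPA R M))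
    (hΔ : ∀ (n : ℕ) (m : M),
      Δ (dpGamma R M n m) =
        ∑ i ∈ Finset.range (n + 1), dpGamma R M i m ⊗ₜ[R] dpGamma R M (n - i) m)
    (proj : ℕ → (DPA R M →ₗ[R] DPA R M))
    (hproj₁ : ∀ k, ∀ x ∈ GammaPow R M k, proj k x = x)
    (hproj₂ : ∀ k l, k ≠ l → ∀ x ∈ GammaPow R M l, proj k x = 0)
    (i j : ℕ) :
    ∀ x ∈ GammaPow R M (i + j),
      LinearMap.mul' R (DPA R M) (TensorProduct.map (proj i) (proj j) (Δ x)) =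
        ((i + j).choose i) • x := by
  classical
  intro x hx
  refine Submodule.span_induction ?_ ?_ ?_ ?_ hx
  · rintro x ⟨k, ms, ns, hsum, rfl⟩
    have hΔprod : Δ (∏ t, dpGamma R M (ns t) (ms t)) =
        ∑ f ∈ Fintype.piFinset (fun t => Finset.range (ns t + 1)),
          (∏ t, dpGamma R M (f t) (ms t)) ⊗ₜ[R] (∏ t, dpGamma R M (ns t - f t) (ms t)) := by
      rw [map_prod]
      simp_rw [hΔ]
      rw [Finset.prod_univ_sum]
      exact Finset.sum_congr rfl fun f _ => prod_tmul_eq _ _ _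
    rw [hΔprod, map_sum, map_sum]
    have hterm : ∀ f ∈ Fintype.piFinset (fun t => Finset.range (ns t + 1)),
        LinearMap.mul' R (DPA R M) (TensorProduct.map (proj i) (proj j)
          ((∏ t, dpGamma R M (f t) (ms t)) ⊗ₜ[R] (∏ t, dpGamma R M (ns t - f t) (ms t)))) =
        ((if (∑ t, f t) = i then ∏ t, (ns t).choose (f t) else 0 : ℕ) : DPA R M) *
          ∏ t, dpGamma R M (ns t) (ms t) := by
      intro f hf
      have hfle : ∀ t, f t ≤ ns t := fun t =>
        Nat.lt_succ_iff.mp (Finset.mem_range.mp (Fintype.mem_piFinset.mp hf t))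
      have hmemL : (∏ t, dpGamma R M (f t) (ms t)) ∈ GammaPow R M (∑ t, f t) :=
        Submodule.subset_span ⟨k, ms, f, rfl, rfl⟩
      rw [TensorProduct.map_tmul, LinearMap.mul'_apply]
      by_cases h : (∑ t, f t) = i
      · have hsumR : (∑ t, (ns t - f t)) = j := by
          rw [Finset.sum_tsub_distrib _ (fun t _ => hfle t), hsum, h]
          omega
        have hmemR : (∏ t, dpGamma R M (ns t - f t) (ms t)) ∈ GammaPow R M j :=
          Submodule.subset_span ⟨k, ms, fun t => ns t - f t, hsumR, rfl⟩
        rw [hproj₁ i _ (h ▸ hmemL), hproj₁ j _ hmemR, if_pos h]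
        rw [← Finset.prod_mul_distrib]
        have : ∀ t, dpGamma R M (f t) (ms t) * dpGamma R M (ns t - f t) (ms t) =
            ((ns t).choose (f t) : DPA R M) * dpGamma R M (ns t) (ms t) := by
          intro t
          have hab : f t + (ns t - f t) = ns t := Nat.add_sub_cancel' (hfle t)
          rw [dpGamma_mul, hab]
        simp_rw [this]
        rw [Finset.prod_mul_distrib, ← Nat.cast_prod]
      · rw [hproj₂ i (∑ t, f t) (fun hh => h hh.symm) _ hmemL, if_neg h]
        simp
    rw [Finset.sum_congr rfl hterm, ← Finset.sum_mul, ← Nat.cast_sum, vand, hsum,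
      nsmul_eq_mul]
  · simp
  · intro x y _ _ hx hy
    rw [map_add, map_add, map_add, hx, hy, smul_add]
  · intro r x _ hx
    rw [map_smul, map_smul, map_smul, hx, smul_comm]
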